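/- If (α₁,…,α₆) satisfies α₆ ≠ 0 and ι₁ = α₆(α₁−α₂) − α₄² + α₅² > 0, then with θ₁ = −(1/2)arctan(2(α₃α₆ + α₄α₅)/ι₁), a₁ = (α₅cosθ₁ − α₄sinθ₁)/α₆, b₁ = (α₄cosθ₁ + α₅sinθ₁)/α₆, the transformed parameters under the induced SE(2) action with (θ,a,b) = (θ₁,a₁,b₁) satisfy ᾱ₃ = 0, ᾱ₄ = 0, ᾱ₅ = 0, i.e., the point is mapped to the elliptic-hyperbolic cross-section. -/

import Mathlib

/-- if α₆ ≠ 0 and ι₁ = α₆(α₁−α₂) − α₄² + α₅² > 0, the moving-frame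
parameters (θ₁, a₁, b₁) map the point onto the elliptic-hyperbolic cross-section:
ᾱ₃ = ᾱ₄ = ᾱ₅ = 0. -/
theorem EH_moving_frame_normalizes (α1 α2 α3 α4 α5 α6 : ℝ) (h6 : α6 ≠ 0)
    (hι : α6*(α1 - α2) - α4^2 + α5^2 > 0) :
    let θ := -(1/2) * Real.arctan
      (2*(α3*α6 + α4*α5) / (α6*(α1 - α2) - α4^2 + α5^2))
    let a := (α5*Real.cos θ - α4*Real.sin θ) / α6
    let b := (α4*Real.cos θ + α5*Real.sin θ) / α6
    (α1 - α2)*(Real.sin θ)*(Real.cos θ) + α3*((Real.cos θ)^2 - (Real.sin θ)^2)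
        + (α4*a + α5*b)*(Real.cos θ) + (α5*a - α4*b)*(Real.sin θ) - α6*a*b = 0 ∧
    α4*(Real.cos θ) + α5*(Real.sin θ) - α6*b = 0 ∧
    α5*(Real.cos θ) - α4*(Real.sin θ) - α6*a = 0 := by
  intro θ a b
  have hι' : (α6*(α1 - α2) - α4^2 + α5^2) ≠ 0 := ne_of_gt hι
  set x : ℝ := 2*(α3*α6 + α4*α5) / (α6*(α1 - α2) - α4^2 + α5^2) with hx
  have hsq : Real.sqrt (1 + x^2) ≠ 0 := by positivity
  have key : (α6*(α1-α2)-α4^2+α5^2) * (Real.sin θ * Real.cos θ)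
      + (α3*α6+α4*α5) * ((Real.cos θ)^2 - (Real.sin θ)^2) = 0 := by
    have h2 : 2 * θ = -Real.arctan x := by simp [θ, x]
    have hs : Real.sin θ * Real.cos θ = Real.sin (2*θ) / 2 := by
      rw [Real.sin_two_mul]; ring
    have hc : (Real.cos θ)^2 - (Real.sin θ)^2 = Real.cos (2*θ) :=
      (Real.cos_two_mul' θ).symm
    rw [hs, hc, h2, Real.sin_neg, Real.cos_neg, Real.sin_arctan, Real.cos_arctan]
    rw [hx]
    field_simp
    ring
  have hpyth := Real.sin_sq_add_cos_sq θ
  refine ⟨?_, ?_, ?_⟩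
  · show (α1 - α2)*(Real.sin θ)*(Real.cos θ) + α3*((Real.cos θ)^2 - (Real.sin θ)^2)
        + (α4*((α5*Real.cos θ - α4*Real.sin θ) / α6)
          + α5*((α4*Real.cos θ + α5*Real.sin θ) / α6))*(Real.cos θ)
        + (α5*((α5*Real.cos θ - α4*Real.sin θ) / α6)
          - α4*((α4*Real.cos θ + α5*Real.sin θ) / α6))*(Real.sin θ)
        - α6*((α5*Real.cos θ - α4*Real.sin θ) / α6)
          *((α4*Real.cos θ + α5*Real.sin θ) / α6) = 0
    field_simp
    linear_combination key
  · show α4*(Real.cos θ) + α5*(Real.sin θ)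
        - α6*((α4*Real.cos θ + α5*Real.sin θ) / α6) = 0
    field_simp
    ring
  · show α5*(Real.cos θ) - α4*(Real.sin θ)
        - α6*((α5*Real.cos θ - α4*Real.sin θ) / α6) = 0
    field_simp
    ring
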